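/- Let n ≥ 3 and let W° = {±1}°^n ⋊ S_n be the group acting on ℝ^n by coordinate permutations combined with an even number of sign changes (the Weyl group of the root system D_n). Let b = e₁ = (1, 0, …, 0) and let W°_b be its stabilizer in W°. Then every W°_b-invariant polynomial function on ℝ^n lies in the ℝ-subalgebra generated by the W°-invariant polynomial functions f together with their translates v ↦ f(v + b). -/

import Mathlib

open scoped RealInnerProductSpace

/-- The signed permutation `(ε, σ)` acting on `ℝ^n`: `x ↦ (ε i * x (σ i))_i`. -/
noncomputable def sgnPerm {n : ℕ} (ε : Fin n → ℝ) (σ : Equiv.Perm (Fin n))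
    (x : EuclideanSpace ℝ (Fin n)) : EuclideanSpace ℝ (Fin n) :=
  WithLp.toLp 2 (fun i => ε i * x (σ i))

/-- A polynomial function on a real vector space `M`: an element of the `ℝ`-subalgebra of
`M → ℝ` generated by the linear functionals. -/
def IsPolyFun {M : Type*} [AddCommGroup M] [Module ℝ M] (f : M → ℝ) : Prop :=
  f ∈ Algebra.adjoin ℝ {g : M → ℝ | ∃ l : M →ₗ[ℝ] ℝ, g = ⇑l}

/-- Invariance of `f : ℝ^n → ℝ` under the group `W = {±1}^n ⋊ S_n` of all signed
permutations of the coordinates. -/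
def IsWInv {n : ℕ} (f : EuclideanSpace ℝ (Fin n) → ℝ) : Prop :=
  ∀ (ε : Fin n → ℝ), (∀ i, ε i = 1 ∨ ε i = -1) → ∀ σ : Equiv.Perm (Fin n),
    ∀ x, f (sgnPerm ε σ x) = f x

/-- Invariance of `f : ℝ^n → ℝ` under the group `W° = {±1}°^n ⋊ S_n` of signed
permutations with an even number of sign changes (`∏ ε i = 1`). -/
def IsW0Inv {n : ℕ} (f : EuclideanSpace ℝ (Fin n) → ℝ) : Prop :=
  ∀ (ε : Fin n → ℝ), (∀ i, ε i = 1 ∨ ε i = -1) → (∏ i, ε i = 1) →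
    ∀ σ : Equiv.Perm (Fin n), ∀ x, f (sgnPerm ε σ x) = f x

open MvPolynomial
set_option linter.unusedSectionVars false

variable {τ : Type*} [Fintype τ] [DecidableEq τ]

/-- substitution action `X i ↦ ε i • X (σ i)` -/
noncomputable def actP (ε : τ → ℝ) (σ : Equiv.Perm τ) :
    MvPolynomial τ ℝ →ₐ[ℝ] MvPolynomial τ ℝ :=
  aeval (fun i => C (ε i) * X (σ i))

lemma actP_X (ε : τ → ℝ) (σ : Equiv.Perm τ) (i : τ) :
    actP ε σ (X i) = C (ε i) * X (σ i) := aeval_X _ _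

lemma actP_comp (ε δ : τ → ℝ) (σ ρ : Equiv.Perm τ) :
    (actP ε σ).comp (actP δ ρ) = actP (fun i => δ i * ε (ρ i)) (σ * ρ) := by
  apply MvPolynomial.algHom_ext
  intro i
  simp only [AlgHom.coe_comp, Function.comp_apply, actP_X, map_mul, Equiv.Perm.mul_apply,
    map_mul, C_mul]
  rw [show (actP ε σ) (C (δ i)) = C (δ i) from by rw [actP, aeval_C, algebraMap_eq]]
  ring

lemma actP_actP (ε δ : τ → ℝ) (σ ρ : Equiv.Perm τ) (q : MvPolynomial τ ℝ) :
    actP ε σ (actP δ ρ q) = actP (fun i => δ i * ε (ρ i)) (σ * ρ) q :=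
  DFunLike.congr_fun (actP_comp ε δ σ ρ) q

lemma actP_one_one : actP (fun _ : τ => (1:ℝ)) 1 = AlgHom.id ℝ _ := by
  apply MvPolynomial.algHom_ext; intro i; simp [actP_X]

lemma actP_one_monomial (ε : τ → ℝ) (d : τ →₀ ℕ) (c : ℝ) :
    actP ε 1 (monomial d c) = monomial d (c * ∏ i, ε i ^ d i) := by
  rw [actP, aeval_monomial, monomial_eq,
      Finsupp.prod_fintype _ _ (fun i => pow_zero _),
      Finsupp.prod_fintype _ _ (fun i => pow_zero _)]
  simp only [Equiv.Perm.one_apply, mul_pow, Finset.prod_mul_distrib, algebraMap_eq]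
  rw [show (∏ x : τ, C (ε x) ^ d x) = C (∏ i : τ, ε i ^ d i) from by
    rw [map_prod (C : ℝ →+* MvPolynomial τ ℝ) (fun i => ε i ^ d i) Finset.univ]
    exact Finset.prod_congr rfl fun i _ => (map_pow (C : ℝ →+* MvPolynomial τ ℝ) _ _).symm]
  rw [C_mul]; ring

lemma coeff_actP_one (ε : τ → ℝ) (q : MvPolynomial τ ℝ) (d : τ →₀ ℕ) :
    coeff d (actP ε 1 q) = (∏ i, ε i ^ d i) * coeff d q := by
  conv_lhs => rw [q.as_sum, map_sum]
  rw [coeff_sum]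
  simp only [actP_one_monomial, coeff_monomial]
  rw [Finset.sum_congr rfl (g := fun u => if u = d then coeff u q * ∏ i, ε i ^ u i else 0)
    (fun u _ => by split <;> simp_all)]
  rw [Finset.sum_ite_eq' q.support d (fun u => coeff u q * ∏ i, ε i ^ u i)]
  by_cases h : d ∈ q.support
  · rw [if_pos h]; ring
  · rw [if_neg h, mem_support_iff, not_not] at *
    rw [h]; ring

/-- sign vector flipping coordinate `i₀` only -/
def flipAt (i₀ : τ) : τ → ℝ := fun j => if j = i₀ then -1 else 1

lemma flipAt_pm (i₀ i : τ) : flipAt i₀ i = 1 ∨ flipAt i₀ i = -1 := by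
  unfold flipAt; split <;> simp

lemma flipAt_sq (i₀ i : τ) : flipAt i₀ i * flipAt i₀ i = 1 := by
  unfold flipAt; split <;> norm_num

lemma prod_flipAt_pow (i₀ : τ) (d : τ →₀ ℕ) :
    ∏ i, flipAt i₀ i ^ d i = (-1 : ℝ) ^ d i₀ := by
  rw [Finset.prod_eq_single i₀]
  · simp [flipAt]
  · intro j _ hj; simp [flipAt, hj]
  · simp

lemma coeff_eq_zero_of_flip_even (q : MvPolynomial τ ℝ) (i₀ : τ)
    (h : actP (flipAt i₀) 1 q = -q) (d : τ →₀ ℕ) (hd : Even (d i₀)) : coeff d q = 0 := by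
  have := coeff_actP_one (flipAt i₀) q d
  rw [h, prod_flipAt_pow, hd.neg_one_pow] at this
  have h2 : coeff d (-q) = -coeff d q := by simp
  rw [h2] at this
  linarith

lemma coeff_eq_zero_of_flip_odd (q : MvPolynomial τ ℝ) (i₀ : τ)
    (h : actP (flipAt i₀) 1 q = q) (d : τ →₀ ℕ) (hd : ¬ Even (d i₀)) : coeff d q = 0 := by
  have := coeff_actP_one (flipAt i₀) q d
  rw [h, prod_flipAt_pow, (Nat.not_even_iff_odd.1 hd).neg_one_pow] at this
  linarith

/-- doubling of an exponent vector -/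
noncomputable def doubF (d : τ →₀ ℕ) : τ →₀ ℕ := d.mapRange (2 * ·) (by simp)

lemma doubF_apply (d : τ →₀ ℕ) (i : τ) : doubF d i = 2 * d i := Finsupp.mapRange_apply

lemma doubF_injective : Function.Injective (doubF (τ := τ)) := by
  intro a b h
  ext i
  have := congrArg (fun f => f i) h
  simp only [doubF_apply] at this
  omega

/-- substitution `X i ↦ X i ^ 2` -/
noncomputable def sqHom : MvPolynomial τ ℝ →ₐ[ℝ] MvPolynomial τ ℝ :=
  aeval (fun i => X i ^ 2)

lemma sqHom_monomial (d : τ →₀ ℕ) (c : ℝ) :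
    sqHom (monomial d c) = monomial (doubF d) c := by
  rw [sqHom, aeval_monomial, monomial_eq,
      Finsupp.prod_fintype _ _ (fun i => pow_zero _),
      Finsupp.prod_fintype _ _ (fun i => pow_zero _)]
  simp [algebraMap_eq, doubF_apply, ← pow_mul, mul_comm]

lemma coeff_sqHom_doubF (r : MvPolynomial τ ℝ) (d : τ →₀ ℕ) :
    coeff (doubF d) (sqHom r) = coeff d r := by
  conv_lhs => rw [r.as_sum, map_sum]
  rw [coeff_sum]
  simp only [sqHom_monomial, coeff_monomial]
  rw [Finset.sum_congr rfl (g := fun u => if u = d then coeff u r else 0)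
    (fun u _ => by
      by_cases h : u = d
      · simp [h]
      · rw [if_neg (fun hc => h (doubF_injective hc))]; simp [h])]
  rw [Finset.sum_ite_eq' r.support d (fun u => coeff u r)]
  by_cases h : d ∈ r.support
  · rw [if_pos h]
  · rw [if_neg h]; rw [mem_support_iff, not_not] at h; rw [h]

lemma sqHom_injective : Function.Injective (sqHom (τ := τ)) := by
  intro a b h
  ext d
  rw [← coeff_sqHom_doubF a d, ← coeff_sqHom_doubF b d, h]

lemma rename_sqHom (σ : Equiv.Perm τ) (r : MvPolynomial τ ℝ) :
    rename σ (sqHom r) = sqHom (rename σ r) := by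
  have : (rename (R := ℝ) σ).comp sqHom = (sqHom).comp (rename σ) := by
    apply MvPolynomial.algHom_ext
    intro i
    simp [sqHom]
  exact DFunLike.congr_fun this r

/-- every polynomial with all exponents even is a square substitution of a polynomial,
symmetric if the original is -/
lemma exists_sqHom_eq (q : MvPolynomial τ ℝ)
    (he : ∀ d ∈ q.support, ∀ i, Even (d i)) :
    ∃ r : MvPolynomial τ ℝ, sqHom r = q ∧ (q.IsSymmetric → r.IsSymmetric) := by
  set halfF : (τ →₀ ℕ) → (τ →₀ ℕ) := fun d => d.mapRange (· / 2) (by simp) with hhalf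
  have key : ∀ d ∈ q.support, doubF (halfF d) = d := by
    intro d hd
    ext i
    obtain ⟨c, hc⟩ := (he d hd i)
    rw [doubF_apply]
    simp only [hhalf, Finsupp.mapRange_apply]
    omega
  refine ⟨∑ d ∈ q.support, monomial (halfF d) (coeff d q), ?_, ?_⟩
  · rw [map_sum]
    simp only [sqHom_monomial]
    conv_rhs => rw [q.as_sum]
    exact Finset.sum_congr rfl fun d hd => by rw [key d hd]
  · intro hq σ
    apply sqHom_injective
    rw [← rename_sqHom]
    have h1 : sqHom (∑ d ∈ q.support, monomial (halfF d) (coeff d q)) = q := by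
      rw [map_sum]
      simp only [sqHom_monomial]
      conv_rhs => rw [q.as_sum]
      exact Finset.sum_congr rfl fun d hd => by rw [key d hd]
    rw [h1, hq σ]

/-- generic: `aeval` of members lands in a subalgebra -/
lemma aeval_mem_of_mem {ι : Type*} {S : Type*} [CommRing S] [Algebra ℝ S]
    (A : Subalgebra ℝ S) (f : ι → S) (hf : ∀ i, f i ∈ A) (r : MvPolynomial ι ℝ) :
    aeval f r ∈ A := by
  induction r using MvPolynomial.induction_on with
  | C a => simpa using A.algebraMap_mem a
  | add p q hp hq => rw [map_add]; exact A.add_mem hp hq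
  | mul_X p i hp => rw [map_mul, aeval_X]; exact A.mul_mem hp (hf i)

lemma esymm_mem_adjoin_psum (k : ℕ) :
    esymm τ ℝ k ∈ Algebra.adjoin ℝ (Set.range fun j : ℕ => psum τ ℝ (j + 1)) := by
  induction k using Nat.strong_induction_on with
  | _ k ih =>
  rcases Nat.eq_zero_or_pos k with rfl | hk
  · rw [esymm_zero]; exact Subalgebra.one_mem _
  · have hN := MvPolynomial.mul_esymm_eq_sum τ ℝ k
    have hC : (C ((k : ℝ)⁻¹) : MvPolynomial τ ℝ) * ((k : ℕ) : MvPolynomial τ ℝ) = 1 := by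
      have : ((k : ℕ) : MvPolynomial τ ℝ) = C ((k : ℕ) : ℝ) := by
        simp [MvPolynomial.C_eq_coe_nat]
      rw [this, ← C_mul, inv_mul_cancel₀ (by positivity), C_1]
    have heq : esymm τ ℝ k =
        C ((k : ℝ)⁻¹) * ((-1) ^ (k + 1) *
          ∑ a ∈ Finset.HasAntidiagonal.antidiagonal k with a.1 < k,
            (-1) ^ a.1 * esymm τ ℝ a.1 * psum τ ℝ a.2) := by
      rw [← hN, ← mul_assoc, hC, one_mul]
    rw [heq]
    apply Subalgebra.mul_mem
    · exact Subalgebra.algebraMap_mem _ _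
    apply Subalgebra.mul_mem
    · exact Subalgebra.pow_mem _ (Subalgebra.neg_mem _ (Subalgebra.one_mem _)) _
    apply Subalgebra.sum_mem
    intro a ha
    simp only [Finset.mem_filter, Finset.mem_antidiagonal] at ha
    apply Subalgebra.mul_mem
    · apply Subalgebra.mul_mem
      · exact Subalgebra.pow_mem _ (Subalgebra.neg_mem _ (Subalgebra.one_mem _)) _
      · exact ih a.1 ha.2
    · have h2 : 1 ≤ a.2 := by have h3 := Finset.HasAntidiagonal.mem_antidiagonal.1 ha.1; omega
      have : psum τ ℝ a.2 = psum τ ℝ ((a.2 - 1) + 1) := by rw [Nat.sub_add_cancel h2]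
      rw [this]
      exact Algebra.subset_adjoin ⟨a.2 - 1, rfl⟩

lemma isSymmetric_mem_adjoin_psum (q : MvPolynomial τ ℝ) (hq : q.IsSymmetric) :
    q ∈ Algebra.adjoin ℝ (Set.range fun j : ℕ => psum τ ℝ (j + 1)) := by
  obtain ⟨r, hr⟩ := esymmAlgHom_surjective (σ := τ) (R := ℝ) (n := Fintype.card τ) le_rfl
    ⟨q, hq⟩
  have : q = aeval (fun i : Fin (Fintype.card τ) => esymm τ ℝ (i + 1)) r := by
    rw [← esymmAlgHom_apply, hr]
  rw [this]
  exact aeval_mem_of_mem _ _ (fun i => esymm_mem_adjoin_psum _) r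

lemma actP_one_eq_rename (σ : Equiv.Perm τ) (q : MvPolynomial τ ℝ) :
    actP (fun _ => (1:ℝ)) σ q = rename σ q := by
  have : actP (fun _ => (1:ℝ)) σ = (rename (R := ℝ) σ : MvPolynomial τ ℝ →ₐ[ℝ] _) := by
    apply MvPolynomial.algHom_ext
    intro i
    simp [actP_X]
  exact DFunLike.congr_fun this q

lemma sqHom_psum (j : ℕ) : sqHom (psum τ ℝ j) = psum τ ℝ (2 * j) := by
  rw [psum, psum, map_sum]
  refine Finset.sum_congr rfl fun i _ => ?_
  rw [map_pow, sqHom, aeval_X, ← pow_mul, mul_comm]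

lemma binv_mem (q : MvPolynomial τ ℝ)
    (hq : ∀ ε : τ → ℝ, (∀ i, ε i = 1 ∨ ε i = -1) → ∀ σ, actP ε σ q = q) :
    q ∈ Algebra.adjoin ℝ (Set.range fun j : ℕ => psum τ ℝ (2 * (j + 1))) := by
  have hsymm : q.IsSymmetric := by
    intro σ
    rw [← actP_one_eq_rename]
    exact hq _ (fun i => Or.inl rfl) σ
  have heven : ∀ d ∈ q.support, ∀ i, Even (d i) := by
    intro d hd i
    by_contra hodd
    rw [mem_support_iff] at hd
    exact hd (coeff_eq_zero_of_flip_odd q i (hq _ (flipAt_pm i) 1) d hodd)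
  obtain ⟨r, hr, hrs⟩ := exists_sqHom_eq q heven
  have hrmem := isSymmetric_mem_adjoin_psum r (hrs hsymm)
  have : q = sqHom r := hr.symm
  rw [this]
  have himg : sqHom r ∈ (Algebra.adjoin ℝ
      (Set.range fun j : ℕ => psum τ ℝ (j + 1))).map sqHom :=
    Subalgebra.mem_map.2 ⟨r, hrmem, rfl⟩
  rw [← Algebra.adjoin_image] at himg
  refine Algebra.adjoin_mono ?_ himg
  rintro _ ⟨_, ⟨j, rfl⟩, rfl⟩
  exact ⟨j, (sqHom_psum (j + 1)).symm⟩

lemma prod_pm (ε : τ → ℝ) (hε : ∀ i, ε i = 1 ∨ ε i = -1) :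
    (∏ i, ε i) = 1 ∨ (∏ i, ε i) = -1 := by
  rw [← mul_self_eq_one_iff, ← Finset.prod_mul_distrib]
  refine Finset.prod_eq_one fun i _ => ?_
  rcases hε i with h | h <;> rw [h] <;> norm_num

lemma prod_flipAt (i₀ : τ) : (∏ i, flipAt i₀ i) = -1 := by
  rw [Finset.prod_eq_single i₀]
  · simp [flipAt]
  · intro j _ hj; simp [flipAt, hj]
  · simp

lemma actP_prod_X (ε : τ → ℝ) (σ : Equiv.Perm τ) :
    actP ε σ (∏ i, X i : MvPolynomial τ ℝ) = C (∏ i, ε i) * ∏ i, X i := by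
  rw [map_prod]
  simp only [actP_X]
  rw [Finset.prod_mul_distrib, map_prod (C : ℝ →+* MvPolynomial τ ℝ)]
  congr 1
  exact Equiv.prod_comp σ fun i => (X i : MvPolynomial τ ℝ)

lemma actP_congr {ε ε' : τ → ℝ} {σ σ' : Equiv.Perm τ} (q : MvPolynomial τ ℝ)
    (h1 : ∀ i, ε i = ε' i) (h2 : σ = σ') : actP ε σ q = actP ε' σ' q := by
  subst h2; rw [show ε = ε' from funext h1]

lemma actP_after_flip (i₀ : τ) (δ : τ → ℝ) (σ : Equiv.Perm τ) (q : MvPolynomial τ ℝ) :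
    actP δ σ (actP (flipAt i₀) 1 q) = actP (fun i => flipAt i₀ i * δ i) σ q := by
  rw [actP_actP]
  exact actP_congr _ (fun i => by simp) (mul_one σ)

lemma flip_after_actP (i₀ : τ) (δ : τ → ℝ) (σ : Equiv.Perm τ) (q : MvPolynomial τ ℝ) :
    actP (flipAt i₀) 1 (actP δ σ q) = actP (fun i => δ i * flipAt i₀ (σ i)) σ q := by
  rw [actP_actP]
  exact actP_congr _ (fun i => rfl) (one_mul σ)

lemma dinv_mem (i₀ : τ) (q : MvPolynomial τ ℝ)
    (hq : ∀ ε : τ → ℝ, (∀ i, ε i = 1 ∨ ε i = -1) → (∏ i, ε i = 1) →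
      ∀ σ, actP ε σ q = q) :
    q ∈ Algebra.adjoin ℝ
      ((Set.range fun j : ℕ => psum τ ℝ (2 * (j + 1))) ∪ {∏ i, X i}) := by
  classical
  set tq := actP (flipAt i₀) 1 q with htq
  have hflip2 : ∀ i, flipAt i₀ i * flipAt i₀ i = 1 := flipAt_sq i₀
  have hprodflipσ : ∀ σ : Equiv.Perm τ, (∏ i, flipAt i₀ (σ i)) = -1 := fun σ => by
    rw [Equiv.prod_comp σ (flipAt i₀)]; exact prod_flipAt i₀
  -- action on q and tq for arbitrary signed permutations
  have hKq : ∀ ε : τ → ℝ, (∀ i, ε i = 1 ∨ ε i = -1) → ∀ σ : Equiv.Perm τ,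
      (∏ i, ε i = 1 → actP ε σ q = q) ∧ (∏ i, ε i = -1 → actP ε σ q = tq) := by
    intro ε hε σ
    refine ⟨fun hp => hq ε hε hp σ, fun hp => ?_⟩
    have hη : ∀ i, ε i * flipAt i₀ (σ i) = 1 ∨ ε i * flipAt i₀ (σ i) = -1 := by
      intro i
      rcases hε i with h2 | h2 <;> rcases flipAt_pm i₀ (σ i) with h3 | h3 <;>
        simp [h2, h3]
    have hηp : (∏ i, ε i * flipAt i₀ (σ i)) = 1 := by
      rw [Finset.prod_mul_distrib, hp, hprodflipσ]; norm_num
    have step : actP (fun i => ε i * flipAt i₀ (σ i)) σ q = q := hq _ hη hηp σ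
    have comp2 := flip_after_actP i₀ (fun i => ε i * flipAt i₀ (σ i)) σ q
    rw [step] at comp2
    have : (fun i => (ε i * flipAt i₀ (σ i)) * flipAt i₀ (σ i)) = ε := by
      funext i; rw [mul_assoc, hflip2 (σ i), mul_one]
    rw [this] at comp2
    rw [← comp2, htq]
  have hKtq : ∀ ε : τ → ℝ, (∀ i, ε i = 1 ∨ ε i = -1) → ∀ σ : Equiv.Perm τ,
      (∏ i, ε i = 1 → actP ε σ tq = tq) ∧ (∏ i, ε i = -1 → actP ε σ tq = q) := by
    intro ε hε σ
    have hδ : ∀ i, flipAt i₀ i * ε i = 1 ∨ flipAt i₀ i * ε i = -1 := by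
      intro i
      rcases flipAt_pm i₀ i with h1 | h1 <;> rcases hε i with h2 | h2 <;> simp [h1, h2]
    have hδp : (∏ i, flipAt i₀ i * ε i) = -(∏ i, ε i) := by
      rw [Finset.prod_mul_distrib, prod_flipAt]; ring
    have comp1 : actP ε σ tq = actP (fun i => flipAt i₀ i * ε i) σ q := by
      rw [htq, actP_after_flip]
    constructor
    · intro hp
      rw [comp1, (hKq _ hδ σ).2 (by rw [hδp, hp])]
    · intro hp
      rw [comp1, (hKq _ hδ σ).1 (by rw [hδp, hp]; ring)]
  -- decompose q = g + h
  set g := (1/2 : ℝ) • (q + tq) with hg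
  set h := (1/2 : ℝ) • (q - tq) with hh
  have hq_eq : q = g + h := by rw [hg, hh]; module
  -- g is invariant under all signed permutations
  have hgB : ∀ ε : τ → ℝ, (∀ i, ε i = 1 ∨ ε i = -1) → ∀ σ, actP ε σ g = g := by
    intro ε hε σ
    rw [hg, map_smul, map_add]
    rcases prod_pm ε hε with hp | hp
    · rw [(hKq ε hε σ).1 hp, (hKtq ε hε σ).1 hp]
    · rw [(hKq ε hε σ).2 hp, (hKtq ε hε σ).2 hp, add_comm]
  -- h is anti-invariant for odd sign count
  have hhB : ∀ ε : τ → ℝ, (∀ i, ε i = 1 ∨ ε i = -1) → ∀ σ,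
      (∏ i, ε i = 1 → actP ε σ h = h) ∧ (∏ i, ε i = -1 → actP ε σ h = -h) := by
    intro ε hε σ
    constructor
    · intro hp
      rw [hh, map_smul, map_sub, (hKq ε hε σ).1 hp, (hKtq ε hε σ).1 hp]
    · intro hp
      rw [hh, map_smul, map_sub, (hKq ε hε σ).2 hp, (hKtq ε hε σ).2 hp, ← smul_neg]
      congr 1
      ring
  -- each exponent in h is odd (in particular positive)
  have hodd : ∀ d ∈ h.support, ∀ i, ¬ Even (d i) := by
    intro d hd i he
    rw [mem_support_iff] at hd
    exact hd (coeff_eq_zero_of_flip_even h i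
      ((hhB (flipAt i) (flipAt_pm i) 1).2 (prod_flipAt i)) d he)
  -- write h = (∏ X i) * h₂
  set onef : τ →₀ ℕ := Finsupp.equivFunOnFinite.symm (fun _ => 1) with honef
  have honef_apply : ∀ i, onef i = 1 := fun i => rfl
  have hprodX : (∏ i, X i : MvPolynomial τ ℝ) = monomial onef 1 := by
    rw [monomial_eq, Finsupp.prod_fintype _ _ (fun i => pow_zero _)]
    simp [honef_apply]
  set h₂ : MvPolynomial τ ℝ := ∑ d ∈ h.support, monomial (d - onef) (coeff d h) with hh₂
  have hfact : h = (∏ i, X i) * h₂ := by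
    rw [hh₂, hprodX, Finset.mul_sum]
    conv_lhs => rw [h.as_sum]
    refine Finset.sum_congr rfl fun d hd => ?_
    rw [monomial_mul, one_mul]
    have : onef + (d - onef) = d := by
      ext i
      have h1 : 1 ≤ d i := by
        have h2 := hodd d hd i
        by_contra hc
        have h3 : d i = 0 := by omega
        exact h2 (by rw [h3]; exact Even.zero)
      rw [Finsupp.add_apply, Finsupp.tsub_apply, honef_apply]
      omega
    rw [this]
  have hEne : (∏ i, X i : MvPolynomial τ ℝ) ≠ 0 := by
    rw [Finset.prod_ne_zero_iff]
    exact fun i _ => X_ne_zero i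
  -- h₂ is invariant under all signed permutations
  have hh₂B : ∀ ε : τ → ℝ, (∀ i, ε i = 1 ∨ ε i = -1) → ∀ σ, actP ε σ h₂ = h₂ := by
    intro ε hε σ
    have hmap : actP ε σ h = C (∏ i, ε i) * (∏ i, X i) * actP ε σ h₂ := by
      rw [hfact, map_mul, actP_prod_X, mul_assoc, ← mul_assoc (C (∏ i, ε i)), mul_assoc]
    rcases prod_pm ε hε with hp | hp
    · rw [(hhB ε hε σ).1 hp, hp, map_one, one_mul] at hmap
      nth_rewrite 1 [hfact] at hmap
      exact (mul_left_cancel₀ hEne hmap.symm)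
    · rw [(hhB ε hε σ).2 hp, hp] at hmap
      have : -((∏ i, X i) * h₂) = -((∏ i, X i) * actP ε σ h₂) := by
        rw [← hfact, hmap]
        simp [map_neg]
      have := neg_injective this
      exact (mul_left_cancel₀ hEne this.symm)
  -- assemble
  have hgmem := binv_mem g hgB
  have hh₂mem := binv_mem h₂ hh₂B
  rw [hq_eq, hfact]
  refine Subalgebra.add_mem _ ?_ (Subalgebra.mul_mem _ ?_ ?_)
  · exact Algebra.adjoin_mono Set.subset_union_left hgmem
  · exact Algebra.subset_adjoin (Set.mem_union_right _ rfl)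
  · exact Algebra.adjoin_mono Set.subset_union_left hh₂mem

section Reduction

variable {N : ℕ} [NeZero N]

local notation "τN" => {i : Fin N // i ≠ 0}

/-- The equivalence `Fin N ≃ Option {i // i ≠ 0}`. -/
noncomputable def e1 : Fin N ≃ Option {i : Fin N // i ≠ 0} :=
  (Equiv.optionSubtypeNe (0 : Fin N)).symm

lemma e1_zero : (e1 (N := N)) 0 = none := Equiv.optionSubtypeNe_symm_self 0

lemma e1_coe (t : τN) : (e1 (N := N)) (t : Fin N) = some t :=
  Equiv.optionSubtypeNe_symm_of_ne t.2

/-- split off the variable `X 0` -/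
noncomputable def ΨN : MvPolynomial (Fin N) ℝ ≃ₐ[ℝ] Polynomial (MvPolynomial τN ℝ) :=
  (renameEquiv ℝ (e1 (N := N))).trans (optionEquivLeft ℝ τN)

lemma ΨN_X_zero : ΨN (X (0 : Fin N)) = Polynomial.X := by
  rw [ΨN]
  simp only [AlgEquiv.trans_apply, renameEquiv_apply, rename_X, e1_zero]
  exact optionEquivLeft_X_none ℝ τN

lemma ΨN_X_coe (t : τN) : ΨN (X (t : Fin N)) = Polynomial.C (X t) := by
  rw [ΨN]
  simp only [AlgEquiv.trans_apply, renameEquiv_apply, rename_X, e1_coe]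
  exact optionEquivLeft_X_some ℝ τN t

lemma ΨN_rename_val (c : MvPolynomial τN ℝ) :
    ΨN (rename (Subtype.val) c) = Polynomial.C c := by
  have : (ΨN.toAlgHom.comp (rename (R := ℝ) (Subtype.val : τN → Fin N)))
      = Polynomial.CAlgHom.comp (AlgHom.id ℝ _) := by
    apply MvPolynomial.algHom_ext
    intro t
    simp only [AlgHom.coe_comp, Function.comp_apply, rename_X, AlgHom.coe_id, id_eq,
      AlgEquiv.toAlgHom_eq_coe, AlgHom.coe_coe]
    rw [show Polynomial.CAlgHom (R := ℝ) (X t) = Polynomial.C (X t) from rfl]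
    exact ΨN_X_coe t
  have h2 := DFunLike.congr_fun this c
  simpa using h2

set_option maxHeartbeats 1000000 in
lemma stab_mem (hne : Nonempty τN) (p : MvPolynomial (Fin N) ℝ)
    (hp : ∀ ε : Fin N → ℝ, (∀ i, ε i = 1 ∨ ε i = -1) → (∏ i, ε i = 1) →
      ∀ σ : Equiv.Perm (Fin N), ε 0 = 1 → σ 0 = 0 → actP ε σ p = p) :
    p ∈ Algebra.adjoin ℝ
      ({(X 0 : MvPolynomial (Fin N) ℝ)} ∪
       (Set.range fun k : ℕ => (∑ t : τN, X (t : Fin N) ^ (2 * (k + 1)) :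
          MvPolynomial (Fin N) ℝ)) ∪
       {(∏ t : τN, X (t : Fin N) : MvPolynomial (Fin N) ℝ)}) := by
  classical
  -- each coefficient of ΨN p is invariant under signed permutations of τN with even signs
  have hcoeff : ∀ (ε' : τN → ℝ), (∀ t, ε' t = 1 ∨ ε' t = -1) → (∏ t, ε' t = 1) →
      ∀ σ' : Equiv.Perm τN, ∀ d : ℕ,
        actP ε' σ' ((ΨN p).coeff d) = (ΨN p).coeff d := by
    intro ε' hε' hprod σ' d
    set ε : Fin N → ℝ := fun i => if h : i = 0 then 1 else ε' ⟨i, h⟩ with hε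
    set σ : Equiv.Perm (Fin N) := Equiv.Perm.ofSubtype σ' with hσ
    have hεpm : ∀ i, ε i = 1 ∨ ε i = -1 := by
      intro i
      by_cases h : i = 0
      · left; simp [hε, h]
      · simpa [hε, h] using hε' ⟨i, h⟩
    have hε0 : ε 0 = 1 := by simp [hε]
    have hσ0 : σ 0 = 0 := Equiv.Perm.ofSubtype_apply_of_not_mem σ' (by simp)
    have hεcoe : ∀ t : τN, ε (t : Fin N) = ε' t := fun t => by simp [hε, t.2]
    have hσcoe : ∀ t : τN, σ (t : Fin N) = (σ' t : Fin N) :=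
      fun t => Equiv.Perm.ofSubtype_apply_of_mem σ' t.2
    have hεprod : (∏ i, ε i) = 1 := by
      rw [← Equiv.prod_comp (e1 (N := N)).symm ε, Fintype.prod_option]
      have h1 : (e1 (N := N)).symm none = 0 := by
        rw [← e1_zero, Equiv.symm_apply_apply]
      have h2 : ∀ t : τN, (e1 (N := N)).symm (some t) = (t : Fin N) := by
        intro t
        rw [← e1_coe, Equiv.symm_apply_apply]
      rw [h1, hε0, one_mul]
      rw [Finset.prod_congr rfl (fun t _ => by rw [h2 t, hεcoe t])]
      exact hprod
    have hstep := hp ε hεpm hεprod σ hε0 hσ0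
    -- commuting square
    have hcomm : (ΨN.toAlgHom.comp (actP ε σ))
        = (Polynomial.mapAlgHom (actP ε' σ')).comp ΨN.toAlgHom := by
      apply MvPolynomial.algHom_ext
      intro i
      simp only [AlgHom.coe_comp, Function.comp_apply, AlgEquiv.toAlgHom_eq_coe,
        AlgHom.coe_coe, actP_X]
      by_cases h : i = 0
      · subst h
        rw [hε0, hσ0]
        rw [show (C (1:ℝ) : MvPolynomial (Fin N) ℝ) * X 0 = X 0 by rw [C_1, one_mul]]
        erw [ΨN_X_zero]
        rw [show (Polynomial.mapAlgHom (actP ε' σ')) (Polynomial.X :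
            Polynomial (MvPolynomial τN ℝ))
            = Polynomial.map (↑(actP ε' σ') : MvPolynomial τN ℝ →+* MvPolynomial τN ℝ)
              Polynomial.X from rfl, Polynomial.map_X]
      · set t : τN := ⟨i, h⟩ with ht
        have hi : i = (t : Fin N) := rfl
        have hC : ΨN (C (ε' t) : MvPolynomial (Fin N) ℝ)
            = Polynomial.C (C (ε' t)) := by
          rw [show (C (ε' t) : MvPolynomial (Fin N) ℝ) = algebraMap ℝ _ (ε' t) from rfl]
          rw [AlgEquiv.commutes]
          rfl
        have hL : ΨN (C (ε i) * X (σ i)) = Polynomial.C (C (ε' t) * X (σ' t)) := by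
          rw [map_mul, hi, hσcoe t, ΨN_X_coe (σ' t), hεcoe t, hC, ← Polynomial.C_mul]
        have hR : (Polynomial.mapAlgHom (actP ε' σ')) (ΨN (X i))
            = Polynomial.C (C (ε' t) * X (σ' t)) := by
          rw [hi, ΨN_X_coe t]
          rw [show (Polynomial.mapAlgHom (actP ε' σ')) (Polynomial.C (X t))
              = Polynomial.map (↑(actP ε' σ') : MvPolynomial τN ℝ →+* MvPolynomial τN ℝ)
                (Polynomial.C (X t)) from rfl, Polynomial.map_C]
          rw [show ((↑(actP ε' σ') : MvPolynomial τN ℝ →+* MvPolynomial τN ℝ) (X t))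
              = actP ε' σ' (X t) from rfl]
          rw [actP_X]
        erw [hL, hR]
    have hPsi : ΨN p = Polynomial.map (actP ε' σ').toRingHom (ΨN p) := by
      conv_lhs => rw [← hstep]
      have := DFunLike.congr_fun hcomm p
      simpa [Polynomial.mapAlgHom] using this
    have := congrArg (fun P => Polynomial.coeff P d) hPsi
    simp only [Polynomial.coeff_map] at this
    exact this.symm
  -- each coefficient lies in the adjoin of the τN-generators
  have hcmem : ∀ d : ℕ, (ΨN p).coeff d ∈ Algebra.adjoin ℝ
      ((Set.range fun j : ℕ => psum τN ℝ (2 * (j + 1))) ∪ {∏ t : τN, X t}) := by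
    intro d
    exact dinv_mem hne.some _ (fun ε' hε' hprod σ' => hcoeff ε' hε' hprod σ' d)
  -- reconstruct p
  set ι : MvPolynomial τN ℝ →ₐ[ℝ] MvPolynomial (Fin N) ℝ :=
    rename (Subtype.val) with hι
  have hrec : p = ∑ d ∈ (ΨN p).support, ι ((ΨN p).coeff d) * (X 0) ^ d := by
    conv_lhs => rw [← AlgEquiv.symm_apply_apply ΨN p]
    conv_lhs => rw [(ΨN p).as_sum_support]
    rw [map_sum]
    refine Finset.sum_congr rfl fun d _ => ?_
    rw [← Polynomial.C_mul_X_pow_eq_monomial, map_mul, map_pow]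
    congr 1
    · rw [← ΨN_rename_val, AlgEquiv.symm_apply_apply]
    · congr 1
      rw [← ΨN_X_zero, AlgEquiv.symm_apply_apply]
  rw [hrec]
  apply Subalgebra.sum_mem
  intro d _
  apply Subalgebra.mul_mem
  · -- ι of the coefficient
    have himg : ι ((ΨN p).coeff d) ∈ (Algebra.adjoin ℝ
        ((Set.range fun j : ℕ => psum τN ℝ (2 * (j + 1))) ∪ {∏ t : τN, X t})).map ι :=
      Subalgebra.mem_map.2 ⟨_, hcmem d, rfl⟩
    rw [← Algebra.adjoin_image] at himg
    refine Algebra.adjoin_mono ?_ himg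
    rintro _ ⟨y, hy, rfl⟩
    rcases hy with ⟨j, rfl⟩ | hy
    · dsimp only
      have hval : ι (psum τN ℝ (2 * (j + 1)))
          = ∑ t : τN, (X (t : Fin N) : MvPolynomial (Fin N) ℝ) ^ (2 * (j + 1)) := by
        rw [show psum τN ℝ (2 * (j + 1)) = ∑ t : τN, X t ^ (2 * (j + 1)) from rfl]
        rw [map_sum]
        exact Finset.sum_congr rfl (fun t _ => by rw [map_pow, rename_X])
      rw [hval]
      exact Set.mem_union_left _ (Set.mem_union_right _ ⟨j, rfl⟩)
    · rw [Set.mem_singleton_iff] at hy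
      subst hy
      have hval : ι (∏ t : τN, X t)
          = ∏ t : τN, (X (t : Fin N) : MvPolynomial (Fin N) ℝ) := by
        rw [map_prod]
        exact Finset.prod_congr rfl fun t _ => rename_X _ _
      rw [hval]
      exact Set.mem_union_right _ (Set.mem_singleton _)
  · exact Subalgebra.pow_mem _ (Algebra.subset_adjoin
      (Set.mem_union_left _ (Set.mem_union_left _ (Set.mem_singleton _)))) d

end Reduction

section Functions

variable {n : ℕ}

/-- the `i`-th coordinate function -/
noncomputable def coordFun (i : Fin n) : EuclideanSpace ℝ (Fin n) → ℝ := fun x => x i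

/-- evaluation of polynomials as functions on `ℝ^n` -/
noncomputable def Φ : MvPolynomial (Fin n) ℝ →ₐ[ℝ] (EuclideanSpace ℝ (Fin n) → ℝ) :=
  aeval coordFun

lemma Φ_apply (p : MvPolynomial (Fin n) ℝ) (x : EuclideanSpace ℝ (Fin n)) :
    Φ p x = eval (fun i => x i) p := by
  induction p using MvPolynomial.induction_on with
  | C r =>
    rw [Φ, aeval_C, eval_C]
    rfl
  | add p q hp hq =>
    rw [map_add, map_add, Pi.add_apply, hp, hq]
  | mul_X p i hp =>
    rw [map_mul, map_mul, Pi.mul_apply, hp, Φ, aeval_X, eval_X]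
    rfl

lemma Φ_injective : Function.Injective (Φ (n := n)) := by
  intro p q h
  apply MvPolynomial.funext
  intro x
  have h2 := congrFun h ((WithLp.equiv 2 (Fin n → ℝ)).symm x)
  rw [Φ_apply, Φ_apply] at h2
  exact h2

/-- the coordinate linear functional -/
noncomputable def coordLM (i : Fin n) : EuclideanSpace ℝ (Fin n) →ₗ[ℝ] ℝ where
  toFun x := x i
  map_add' _ _ := rfl
  map_smul' _ _ := rfl

lemma isPolyFun_iff (f : EuclideanSpace ℝ (Fin n) → ℝ) :
    IsPolyFun f ↔ ∃ p : MvPolynomial (Fin n) ℝ, f = Φ p := by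
  constructor
  · intro hf
    have hrange : f ∈ (Φ (n := n)).range := by
      refine Algebra.adjoin_le ?_ hf
      rintro g ⟨l, rfl⟩
      refine ⟨∑ i, C (l (PiLp.basisFun 2 ℝ (Fin n) i)) * X i, ?_⟩
      funext x
      show Φ (∑ i, C (l (PiLp.basisFun 2 ℝ (Fin n) i)) * X i) x = l x
      rw [Φ_apply, map_sum]
      simp only [map_mul, eval_C, eval_X]
      conv_rhs => rw [← Module.Basis.sum_repr (PiLp.basisFun 2 ℝ (Fin n)) x]
      rw [map_sum]
      refine Finset.sum_congr rfl fun i _ => ?_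
      rw [map_smul, PiLp.basisFun_repr, smul_eq_mul, mul_comm]
    obtain ⟨p, hp⟩ := hrange
    exact ⟨p, hp.symm⟩
  · rintro ⟨p, rfl⟩
    induction p using MvPolynomial.induction_on with
    | C r =>
      rw [show (Φ (C r) : EuclideanSpace ℝ (Fin n) → ℝ) = algebraMap ℝ _ r from aeval_C _ _]
      exact Subalgebra.algebraMap_mem _ r
    | add p q hp hq =>
      rw [map_add]; exact Subalgebra.add_mem _ hp hq
    | mul_X p i hp =>
      rw [map_mul]
      refine Subalgebra.mul_mem _ hp (Algebra.subset_adjoin ⟨coordLM i, ?_⟩)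
      rw [Φ, aeval_X]
      rfl

lemma Φ_actP (ε : Fin n → ℝ) (σ : Equiv.Perm (Fin n)) (p : MvPolynomial (Fin n) ℝ)
    (x : EuclideanSpace ℝ (Fin n)) :
    Φ (actP ε σ p) x = Φ p (sgnPerm ε σ x) := by
  induction p using MvPolynomial.induction_on with
  | C r =>
    rw [show actP ε σ (C r) = algebraMap ℝ _ r from aeval_C _ _]
    rw [show (Φ ((algebraMap ℝ _ r : MvPolynomial (Fin n) ℝ))) = algebraMap ℝ _ r from
      AlgHom.commutes _ r]
    rw [show (Φ (C r) : EuclideanSpace ℝ (Fin n) → ℝ) = algebraMap ℝ _ r from aeval_C _ _]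
    rfl
  | add p q hp hq =>
    rw [map_add, map_add, Pi.add_apply, map_add, Pi.add_apply, hp, hq]
  | mul_X p i hp =>
    have h1 : Φ ((actP ε σ) (X i)) x = ε i * x (σ i) := by
      rw [actP_X, map_mul, Pi.mul_apply]
      congr 1
      · rw [show (Φ (C (ε i)) : EuclideanSpace ℝ (Fin n) → ℝ) = algebraMap ℝ _ (ε i) from
          aeval_C _ _]
        rfl
      · rw [Φ, aeval_X]
        rfl
    have h2 : Φ (X i) (sgnPerm ε σ x) = ε i * x (σ i) := by
      rw [Φ, aeval_X]
      rfl
    rw [map_mul, map_mul, Pi.mul_apply, map_mul, Pi.mul_apply, hp, h1, h2]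

end Functions

lemma actP_psum_even {τ : Type*} [Fintype τ] [DecidableEq τ] (ε : τ → ℝ)
    (hε : ∀ i, ε i = 1 ∨ ε i = -1) (σ : Equiv.Perm τ) (k : ℕ) :
    actP ε σ (psum τ ℝ (2 * k)) = psum τ ℝ (2 * k) := by
  rw [show psum τ ℝ (2 * k) = ∑ i, X i ^ (2 * k) from rfl, map_sum]
  have hterm : ∀ i : τ, actP ε σ (X i ^ (2 * k)) = X (σ i) ^ (2 * k) := by
    intro i
    rw [map_pow, actP_X, mul_pow, ← C_pow]
    have h1 : ε i ^ (2 * k) = 1 := by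
      rcases hε i with h | h <;> rw [h]
      · exact one_pow _
      · exact (even_two_mul k).neg_one_pow
    rw [h1, C_1, one_mul]
  rw [Finset.sum_congr rfl fun i _ => hterm i]
  exact Equiv.sum_comp σ (fun j => X j ^ (2 * k))

lemma isW0Inv_Φ_psum {n : ℕ} (k : ℕ) : IsW0Inv (Φ (psum (Fin n) ℝ (2 * k))) := by
  intro ε hε hprod σ x
  rw [← Φ_actP, actP_psum_even ε hε σ k]

lemma isW0Inv_Φ_prod {n : ℕ} : IsW0Inv (Φ (∏ i, X i : MvPolynomial (Fin n) ℝ)) := by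
  intro ε hε hprod σ x
  rw [← Φ_actP, actP_prod_X, hprod, C_1, one_mul]

lemma eval_psum {n : ℕ} (x : Fin n → ℝ) (m : ℕ) :
    eval x (psum (Fin n) ℝ m) = ∑ i, x i ^ m := by
  rw [show psum (Fin n) ℝ m = ∑ i, X i ^ m from rfl, map_sum]
  simp

theorem Dn_stabilizer_of_b_invariants_generated
    (n : ℕ) (hn : 3 ≤ n)
    (b : EuclideanSpace ℝ (Fin n))
    (hb : ∀ i : Fin n, b i = if (i : ℕ) = 0 then (1 : ℝ) else 0)
    (f : EuclideanSpace ℝ (Fin n) → ℝ) (hf : IsPolyFun f)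
    -- `f` is invariant under the stabilizer `W°_b` of `b` in `W°`
    (hinv : ∀ (ε : Fin n → ℝ), (∀ i, ε i = 1 ∨ ε i = -1) → (∏ i, ε i = 1) →
      ∀ σ : Equiv.Perm (Fin n), sgnPerm ε σ b = b → ∀ x, f (sgnPerm ε σ x) = f x) :
    f ∈ Algebra.adjoin ℝ
      ({g : EuclideanSpace ℝ (Fin n) → ℝ | IsPolyFun g ∧ IsW0Inv g} ∪
       {g : EuclideanSpace ℝ (Fin n) → ℝ | ∃ h : EuclideanSpace ℝ (Fin n) → ℝ,
          (IsPolyFun h ∧ IsW0Inv h) ∧ g = fun v => h (v + b)}) := by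
  classical
  haveI : NeZero n := ⟨by omega⟩
  obtain ⟨p, rfl⟩ := (isPolyFun_iff f).1 hf
  set S : Set (EuclideanSpace ℝ (Fin n) → ℝ) :=
    ({g : EuclideanSpace ℝ (Fin n) → ℝ | IsPolyFun g ∧ IsW0Inv g} ∪
     {g : EuclideanSpace ℝ (Fin n) → ℝ | ∃ h : EuclideanSpace ℝ (Fin n) → ℝ,
        (IsPolyFun h ∧ IsW0Inv h) ∧ g = fun v => h (v + b)}) with hSdef
  -- membership helpers
  have hin1 : ∀ q : MvPolynomial (Fin n) ℝ, IsW0Inv (Φ q) →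
      Φ q ∈ Algebra.adjoin ℝ S := fun q hq =>
    Algebra.subset_adjoin (Set.mem_union_left _ ⟨(isPolyFun_iff _).2 ⟨q, rfl⟩, hq⟩)
  have hin2 : ∀ q : MvPolynomial (Fin n) ℝ, IsW0Inv (Φ q) →
      (fun v => Φ q (v + b)) ∈ Algebra.adjoin ℝ S := fun q hq =>
    Algebra.subset_adjoin (Set.mem_union_right _
      ⟨Φ q, ⟨(isPolyFun_iff _).2 ⟨q, rfl⟩, hq⟩, rfl⟩)
  -- values of b
  have hb0 : b 0 = 1 := by rw [hb 0]; simp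
  have hbne : ∀ i : Fin n, i ≠ 0 → b i = 0 := by
    intro i hi
    rw [hb i, if_neg]
    intro hc
    exact hi (Fin.ext (by rw [hc, Fin.val_zero]))
  -- coordinate function at 0
  have hkey1 : ∀ v : EuclideanSpace ℝ (Fin n),
      Φ (psum (Fin n) ℝ (2 * 1)) (v + b) = Φ (psum (Fin n) ℝ (2 * 1)) v + (2 * v 0 + 1) := by
    intro v
    rw [Φ_apply, Φ_apply, eval_psum, eval_psum]
    have hterm : ∀ i : Fin n, ((v + b) i) ^ (2 * 1)
        = v i ^ (2 * 1) + (if i = 0 then 2 * v i + 1 else 0) := by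
      intro i
      have : (v + b) i = v i + b i := rfl
      rw [this]
      by_cases h : i = 0
      · subst h; rw [hb0, if_pos rfl]; ring
      · rw [hbne i h, if_neg h]; ring
    rw [Finset.sum_congr rfl fun i _ => hterm i, Finset.sum_add_distrib,
      Finset.sum_ite_eq' Finset.univ (0 : Fin n) (fun i => 2 * v i + 1),
      if_pos (Finset.mem_univ _)]
  have hcoord : coordFun 0 ∈ Algebra.adjoin ℝ S := by
    have heq : coordFun (0 : Fin n) = (1/2 : ℝ) •
        ((fun v => Φ (psum (Fin n) ℝ (2 * 1)) (v + b)) - Φ (psum (Fin n) ℝ (2 * 1)) - 1) := by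
      funext v
      rw [Pi.smul_apply, Pi.sub_apply, Pi.sub_apply, Pi.one_apply, hkey1 v, smul_eq_mul]
      show v 0 = 1/2 * (Φ (psum (Fin n) ℝ (2*1)) v + (2 * v 0 + 1) - Φ (psum (Fin n) ℝ (2*1)) v - 1)
      ring
    rw [heq]
    exact Subalgebra.smul_mem _ (Subalgebra.sub_mem _ (Subalgebra.sub_mem _
      (hin2 _ (isW0Inv_Φ_psum 1)) (hin1 _ (isW0Inv_Φ_psum 1))) (Subalgebra.one_mem _)) _
  -- the product over nonzero coordinates
  have hsplit_prod : ∀ v : Fin n → ℝ, (∏ i, v i) = v 0 * ∏ t : {i : Fin n // i ≠ 0}, v t := by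
    intro v
    rw [Fintype.prod_eq_mul_prod_compl (0 : Fin n) v]
    congr 1
    refine Finset.prod_subtype (p := fun i : Fin n => i ≠ 0) {0}ᶜ ?_ v
    intro x
    simp
  have hsplit_sum : ∀ (v : Fin n → ℝ) (m : ℕ),
      (∑ i, v i ^ m) = v 0 ^ m + ∑ t : {i : Fin n // i ≠ 0}, v t ^ m := by
    intro v m
    rw [Fintype.sum_eq_add_sum_compl (0 : Fin n) (fun i => v i ^ m)]
    congr 1
    refine Finset.sum_subtype (p := fun i : Fin n => i ≠ 0) {0}ᶜ ?_ (fun i => v i ^ m)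
    intro x
    simp
  have hevprod : ∀ x : Fin n → ℝ, eval x (∏ i, X i : MvPolynomial (Fin n) ℝ) = ∏ i, x i := by
    intro x; rw [map_prod]; simp
  have hevprod' : ∀ x : Fin n → ℝ,
      eval x (∏ t : {i : Fin n // i ≠ 0}, X (t : Fin n) : MvPolynomial (Fin n) ℝ)
      = ∏ t : {i : Fin n // i ≠ 0}, x t := by
    intro x; rw [map_prod]; simp
  have hevsum' : ∀ (x : Fin n → ℝ) (m : ℕ),
      eval x (∑ t : {i : Fin n // i ≠ 0}, X (t : Fin n) ^ m : MvPolynomial (Fin n) ℝ)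
      = ∑ t : {i : Fin n // i ≠ 0}, x t ^ m := by
    intro x m; rw [map_sum]; simp
  have hprodRest : Φ (∏ t : {i : Fin n // i ≠ 0}, X (t : Fin n)) ∈ Algebra.adjoin ℝ S := by
    have heq : Φ (∏ t : {i : Fin n // i ≠ 0}, X (t : Fin n)) =
        (fun v => Φ (∏ i, X i : MvPolynomial (Fin n) ℝ) (v + b))
          - Φ (∏ i, X i : MvPolynomial (Fin n) ℝ) := by
      funext v
      rw [Pi.sub_apply, Φ_apply, Φ_apply, Φ_apply, hevprod', hevprod, hevprod]
      rw [hsplit_prod (fun i => (v + b) i), hsplit_prod (fun i => v i)]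
      have h0 : (v + b) (0 : Fin n) = v 0 + 1 := by
        rw [show (v + b) (0 : Fin n) = v 0 + b 0 from rfl, hb0]
      rw [h0]
      rw [Finset.prod_congr rfl (fun (t : {i : Fin n // i ≠ 0}) _ =>
        show (v + b) (t : Fin n) = v (t : Fin n) by
          rw [show (v + b) (t : Fin n) = v (t : Fin n) + b (t : Fin n) from rfl,
            hbne _ t.2, add_zero])]
      ring
    rw [heq]
    exact Subalgebra.sub_mem _ (hin2 _ isW0Inv_Φ_prod) (hin1 _ isW0Inv_Φ_prod)
  have hpsumRest : ∀ k : ℕ,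
      Φ (∑ t : {i : Fin n // i ≠ 0}, X (t : Fin n) ^ (2 * (k + 1)))
        ∈ Algebra.adjoin ℝ S := by
    intro k
    have heq : Φ (∑ t : {i : Fin n // i ≠ 0}, X (t : Fin n) ^ (2 * (k + 1))) =
        Φ (psum (Fin n) ℝ (2 * (k + 1))) - (coordFun 0) ^ (2 * (k + 1)) := by
      funext v
      rw [Pi.sub_apply, Pi.pow_apply, Φ_apply, Φ_apply, hevsum', eval_psum,
        hsplit_sum (fun i => v i) (2 * (k + 1))]
      show (∑ t : {i : Fin n // i ≠ 0}, v t ^ (2*(k+1)))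
        = v 0 ^ (2*(k+1)) + (∑ t : {i : Fin n // i ≠ 0}, v t ^ (2*(k+1))) - v 0 ^ (2*(k+1))
      ring
    rw [heq]
    exact Subalgebra.sub_mem _ (hin1 _ (isW0Inv_Φ_psum (k + 1)))
      (Subalgebra.pow_mem _ hcoord _)
  -- invariance of p under the stabilizer
  have hstab : ∀ ε : Fin n → ℝ, (∀ i, ε i = 1 ∨ ε i = -1) → (∏ i, ε i = 1) →
      ∀ σ : Equiv.Perm (Fin n), ε 0 = 1 → σ 0 = 0 → actP ε σ p = p := by
    intro ε hε hprod σ hε0 hσ0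
    have hbfix : sgnPerm ε σ b = b := by
      ext i
      show ε i * b (σ i) = b i
      by_cases h : i = 0
      · subst h; rw [hσ0, hε0, one_mul]
      · have hσi : σ i ≠ 0 := fun hc => h (σ.injective (by rw [hc, hσ0]))
        rw [hbne _ hσi, hbne _ h, mul_zero]
    apply Φ_injective
    funext x
    rw [Φ_actP]
    exact hinv ε hε hprod σ hbfix x
  have hne : Nonempty {i : Fin n // i ≠ 0} := by
    refine ⟨⟨⟨1, by omega⟩, ?_⟩⟩
    intro hc
    have := congrArg Fin.val hc
    simp at this
  have hGmem := stab_mem hne p hstab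
  have himg : Φ p ∈ (Algebra.adjoin ℝ
      ({(X 0 : MvPolynomial (Fin n) ℝ)} ∪
       (Set.range fun k : ℕ => (∑ t : {i : Fin n // i ≠ 0}, X (t : Fin n) ^ (2 * (k + 1)) :
          MvPolynomial (Fin n) ℝ)) ∪
       {(∏ t : {i : Fin n // i ≠ 0}, X (t : Fin n) : MvPolynomial (Fin n) ℝ)})).map Φ :=
    Subalgebra.mem_map.2 ⟨p, hGmem, rfl⟩
  rw [← Algebra.adjoin_image] at himg
  refine Algebra.adjoin_le ?_ himg
  rintro _ ⟨y, hy, rfl⟩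
  rcases hy with hy | hy
  · rcases hy with hy | ⟨k, rfl⟩
    · rw [Set.mem_singleton_iff] at hy
      subst hy
      rw [show (Φ (X (0 : Fin n)) : EuclideanSpace ℝ (Fin n) → ℝ) = coordFun 0 from
        aeval_X _ _]
      exact hcoord
    · exact hpsumRest k
  · rw [Set.mem_singleton_iff] at hy
    subst hy
    exact hprodRest
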